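/- arXiv:2505.22819 — 2 statements merged into one kernel-verified Lean document; each statement's English description precedes it below -/
import Mathlib

section
/- For every natural number n, ∑_{k=0}^{n} 2^{n-k} · s(n,k) · B_k = ∑_{k=0}^{n} b(n,k) · (-1)^k · k! / (k+1), where B_k are the Bernoulli numbers, s(n,k) are the signed Stirling numbers of the first kind, and b(n,k) are the Bessel numbers of the first kind. -/
/-- The signed Stirling numbers of the first kind `s(n,k)`, defined as the
coefficients in the falling factorial expansion
`x(x-1)⋯(x-n+1) = ∑_{k=0}^{n} s(n,k) xᵏ`. -/
noncomputable def stirlingFirst (n k : ℕ) : ℤ :=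
  (descPochhammer ℤ n).coeff k

/-- The Bessel numbers of the first kind:
`b(n,k) = (-1)^{n-k} (2n-k-1)! / (2^{n-k} (k-1)! (n-k)!)` for `1 ≤ k ≤ n`,
`b(0,0) = 1`, `b(n,0) = 0` for `n ≥ 1`, and `b(n,k) = 0` for `n < k`. -/
def besselFirst (n k : ℕ) : ℚ :=
  if k = 0 then (if n = 0 then 1 else 0)
  else if k ≤ n then
    (-1) ^ (n - k) * (Nat.factorial (2 * n - k - 1)) /
      (2 ^ (n - k) * (Nat.factorial (k - 1)) * (Nat.factorial (n - k)))
  else 0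

section Aux
open Polynomial Finset

noncomputable def L : ℚ[X] →ₗ[ℚ] ℚ :=
  Polynomial.lsum (fun j => LinearMap.toSpanSingleton ℚ ℚ (_root_.bernoulli j))

lemma L_monomial (j : ℕ) (a : ℚ) : L (monomial j a) = a * _root_.bernoulli j := by
  simp [L, Polynomial.lsum_apply, Polynomial.sum_monomial_index,
    LinearMap.toSpanSingleton_apply, smul_eq_mul]

lemma L_shift (p : ℚ[X]) : L (p.comp (X + 1)) = L p + p.coeff 1 := by
  induction p using Polynomial.induction_on' with
  | add p q hp hq => simp only [add_comp, map_add, hp, hq, coeff_add]; ring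
  | monomial j a =>
    have h1 : (monomial j a).comp (X + 1) = ∑ i ∈ range (j+1), monomial i (a * (j.choose i)) := by
      rw [← C_mul_X_pow_eq_monomial, mul_comp, C_comp, X_pow_comp, add_pow]
      simp only [one_pow, mul_one]
      rw [Finset.mul_sum]
      refine Finset.sum_congr rfl fun i _ => ?_
      rw [← C_mul_X_pow_eq_monomial, C_mul, C_eq_natCast]
      ring
    rw [h1, map_sum]
    simp only [L_monomial, coeff_monomial]
    rw [Finset.sum_range_succ]
    have h2 : ∑ i ∈ range j, a * (j.choose i) * _root_.bernoulli i
        = a * ∑ i ∈ range j, (j.choose i : ℚ) * _root_.bernoulli i := by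
      rw [Finset.mul_sum]; exact Finset.sum_congr rfl fun i _ => by ring
    rw [h2, _root_.sum_bernoulli]
    by_cases hj : j = 1 <;> simp [hj] <;> ring

lemma coeff_one_descPochhammer (n : ℕ) :
    (descPochhammer ℚ (n+1)).coeff 1 = (-1)^n * n.factorial := by
  induction n with
  | zero => simp [descPochhammer_one]
  | succ n ih =>
    rw [descPochhammer_succ_right]
    have h0 : (descPochhammer ℚ (n+1)).coeff 0 = 0 := by
      rw [coeff_zero_eq_eval_zero, descPochhammer_eval_zero]
      simp
    have hc : (((n+1 : ℕ) : ℚ[X])) = C ((n+1 : ℕ) : ℚ) := by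
      rw [C_eq_natCast]
    rw [hc, mul_sub, coeff_sub, coeff_mul_X, coeff_mul_C, h0, ih, Nat.factorial_succ]
    push_cast
    ring

lemma L_descPochhammer (k : ℕ) :
    L (descPochhammer ℚ k) = (-1)^k * k.factorial / (k+1) := by
  have hcomp : (descPochhammer ℚ (k+1)).comp (X + 1)
      = descPochhammer ℚ (k+1) + (((k+1 : ℕ) : ℚ)) • descPochhammer ℚ k := by
    rw [descPochhammer_succ_left, mul_comp, X_comp, comp_assoc, sub_comp, X_comp, one_comp,
      add_sub_cancel_right, comp_X]
    rw [← descPochhammer_succ_left, descPochhammer_succ_right]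
    rw [smul_eq_C_mul, C_eq_natCast]
    push_cast
    ring
  have h := L_shift (descPochhammer ℚ (k+1))
  rw [hcomp, map_add, map_smul, coeff_one_descPochhammer, smul_eq_mul] at h
  have h2 : ((k+1 : ℕ) : ℚ) * L (descPochhammer ℚ k) = (-1)^k * k.factorial := by
    push_cast at h ⊢
    linarith
  have h3 : ((k : ℚ) + 1) ≠ 0 := by positivity
  push_cast at h2
  field_simp
  linarith

lemma besselFirst_eq (n k : ℕ) (h1 : k ≠ 0) (h2 : k ≤ n) :
    besselFirst n k = (-1)^(n-k) * (Nat.factorial (2*n-k-1)) /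
      (2^(n-k) * (Nat.factorial (k-1)) * (Nat.factorial (n-k))) := by
  simp [besselFirst, h1, h2]

lemma besselFirst_zero_right (n : ℕ) (hn : n ≠ 0) : besselFirst n 0 = 0 := by
  simp [besselFirst, hn]

lemma besselFirst_of_lt (n k : ℕ) (h : n < k) : besselFirst n k = 0 := by
  have hk : k ≠ 0 := by omega
  simp [besselFirst, hk, Nat.not_le.mpr h]

lemma besselFirst_diag (n : ℕ) : besselFirst n n = 1 := by
  cases n with
  | zero => simp [besselFirst]
  | succ m =>
    rw [besselFirst_eq _ _ (by omega) le_rfl]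
    simp only [Nat.sub_self]
    have : 2 * (m+1) - (m+1) - 1 = m := by omega
    rw [this]
    have : (m+1) - 1 = m := by omega
    rw [this]
    have h := Nat.factorial_pos m
    field_simp
    simp

lemma bessel_rec (n k : ℕ) :
    besselFirst (n+1) (k+1)
      = besselFirst n k + (((k:ℚ)+1) - 2*n) * besselFirst n (k+1) := by
  rcases Nat.lt_or_ge n k with h | h
  · -- k > n : everything 0
    rw [besselFirst_of_lt _ _ (by omega), besselFirst_of_lt _ _ h,
      besselFirst_of_lt _ _ (by omega)]
    ring
  rcases eq_or_lt_of_le h with rfl | hlt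
  · -- k = n
    rw [besselFirst_diag, besselFirst_diag, besselFirst_of_lt _ _ (by omega)]
    ring
  -- now k < n
  rcases Nat.eq_zero_or_pos k with rfl | hk
  · -- k = 0, n ≥ 1
    obtain ⟨m, rfl⟩ : ∃ m, n = m + 1 := ⟨n - 1, by omega⟩
    rw [besselFirst_zero_right _ (by omega),
      besselFirst_eq _ _ (by omega) (by omega), besselFirst_eq _ _ (by omega) (by omega)]
    have e1 : 2*(m+1+1) - (0+1) - 1 = 2*m+2 := by omega
    have e2 : (m+1+1) - (0+1) = m+1 := by omega
    have e3 : 2*(m+1) - (0+1) - 1 = 2*m := by omega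
    have e4 : (m+1) - (0+1) = m := by omega
    rw [e1, e2, e3, e4]
    simp only [Nat.sub_self, Nat.factorial_zero]
    have f1 : Nat.factorial (2*m+2) = (2*m+2) * ((2*m+1) * Nat.factorial (2*m)) := by
      rw [show 2*m+2 = (2*m+1)+1 by omega, Nat.factorial_succ, Nat.factorial_succ]
    have f2 : Nat.factorial (m+1) = (m+1) * Nat.factorial m := Nat.factorial_succ m
    rw [f1, f2]
    have h2m := Nat.factorial_pos (2*m)
    have hm := Nat.factorial_pos m
    have hne1 : (Nat.factorial (2*m) : ℚ) ≠ 0 := by positivity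
    have hne2 : (Nat.factorial m : ℚ) ≠ 0 := by positivity
    push_cast
    rw [pow_succ, pow_succ]
    field_simp
    ring
  -- 1 ≤ k < n
  obtain ⟨j, rfl⟩ : ∃ j, k = j + 1 := ⟨k - 1, by omega⟩
  obtain ⟨m, rfl⟩ : ∃ m, n = j + m + 2 := ⟨n - j - 2, by omega⟩
  rw [besselFirst_eq _ _ (by omega) (by omega), besselFirst_eq _ _ (by omega) (by omega),
    besselFirst_eq _ _ (by omega) (by omega)]
  have e1 : 2*(j+m+2+1) - (j+1+1) - 1 = j+2*m+3 := by omega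
  have e2 : (j+m+2+1) - (j+1+1) = m+1 := by omega
  have e3 : (j+1+1) - 1 = j+1 := by omega
  have e4 : 2*(j+m+2) - (j+1) - 1 = j+2*m+2 := by omega
  have e5 : (j+m+2) - (j+1) = m+1 := by omega
  have e6 : (j+1) - 1 = j := by omega
  have e7 : 2*(j+m+2) - (j+1+1) - 1 = j+2*m+1 := by omega
  have e8 : (j+m+2) - (j+1+1) = m := by omega
  rw [e1, e2, e3, e4, e5, e6, e7, e8]
  have f1 : Nat.factorial (j+2*m+3) = (j+2*m+3) * ((j+2*m+2) * Nat.factorial (j+2*m+1)) := by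
    rw [show j+2*m+3 = (j+2*m+2)+1 by omega, Nat.factorial_succ,
      show j+2*m+2 = (j+2*m+1)+1 by omega, Nat.factorial_succ]
  have f2 : Nat.factorial (j+2*m+2) = (j+2*m+2) * Nat.factorial (j+2*m+1) := by
    rw [show j+2*m+2 = (j+2*m+1)+1 by omega, Nat.factorial_succ]
  have f3 : Nat.factorial (j+1) = (j+1) * Nat.factorial j := Nat.factorial_succ j
  have f4 : Nat.factorial (m+1) = (m+1) * Nat.factorial m := Nat.factorial_succ m
  rw [f1, f2, f3, f4]
  have hne1 : (Nat.factorial (j+2*m+1) : ℚ) ≠ 0 := by positivity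
  have hne2 : (Nat.factorial j : ℚ) ≠ 0 := by positivity
  have hne3 : (Nat.factorial m : ℚ) ≠ 0 := by positivity
  push_cast
  rw [pow_succ, pow_succ]
  field_simp
  ring

noncomputable def Dpoly (n : ℕ) : ℚ[X] := ∏ j ∈ Finset.range n, (X - C (2*(j:ℚ)))

lemma bessel_rec0 (n : ℕ) : besselFirst (n+1) 0 = ((0:ℚ) - 2*n) * besselFirst n 0 := by
  rcases Nat.eq_zero_or_pos n with rfl | hn
  · simp [besselFirst]
  · rw [besselFirst_zero_right _ (by omega), besselFirst_zero_right _ (by omega)]; ring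

lemma Dpoly_eq (n : ℕ) :
    Dpoly n = ∑ k ∈ range (n+1), C (besselFirst n k) * descPochhammer ℚ k := by
  induction n with
  | zero => simp [Dpoly, besselFirst, descPochhammer_zero]
  | succ n ih =>
    have key : ∀ k : ℕ, descPochhammer ℚ k * (X - C (2*(n:ℚ)))
        = descPochhammer ℚ (k+1) + C ((k:ℚ) - 2*n) * descPochhammer ℚ k := by
      intro k
      rw [descPochhammer_succ_right, ← C_eq_natCast, C_sub, C_mul]
      ring
    have lhs_eq : Dpoly (n+1)
        = (∑ k ∈ range (n+1), C (besselFirst n k) * descPochhammer ℚ (k+1))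
          + ∑ k ∈ range (n+1), C (((k:ℚ) - 2*n) * besselFirst n k) * descPochhammer ℚ k := by
      rw [Dpoly, Finset.prod_range_succ, ← Dpoly, ih, Finset.sum_mul, ← Finset.sum_add_distrib]
      refine Finset.sum_congr rfl fun k _ => ?_
      rw [mul_assoc, key, C_mul]
      ring
    rw [lhs_eq,
      Finset.sum_range_succ' (fun k => C (besselFirst (n+1) k) * descPochhammer ℚ k) (n+1)]
    have rec_eq : ∀ i : ℕ, C (besselFirst (n+1) (i+1)) * descPochhammer ℚ (i+1)
        = C (besselFirst n i) * descPochhammer ℚ (i+1)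
          + C ((((i:ℚ)+1) - 2*n) * besselFirst n (i+1)) * descPochhammer ℚ (i+1) := by
      intro i
      rw [bessel_rec, C_add, C_mul]
      push_cast
      ring
    simp only [rec_eq]
    rw [Finset.sum_add_distrib]
    have h2 : ∑ k ∈ range (n+1), C (((k:ℚ) - 2*n) * besselFirst n k) * descPochhammer ℚ k
        = (∑ i ∈ range (n+1), C ((((i:ℚ)+1) - 2*n) * besselFirst n (i+1)) * descPochhammer ℚ (i+1))
          + C (besselFirst (n+1) 0) * descPochhammer ℚ 0 := by
      rw [Finset.sum_range_succ'
        (fun k => C (((k:ℚ) - 2*n) * besselFirst n k) * descPochhammer ℚ k) n,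
        Finset.sum_range_succ
        (fun i => C ((((i:ℚ)+1) - 2*n) * besselFirst n (i+1)) * descPochhammer ℚ (i+1)) n]
      rw [besselFirst_of_lt n (n+1) (by omega), bessel_rec0]
      simp only [mul_zero, map_zero, zero_mul, add_zero]
      push_cast
      ring
    rw [h2]
    ring

lemma stirlingFirst_cast (n k : ℕ) :
    ((stirlingFirst n k : ℚ)) = (descPochhammer ℚ n).coeff k := by
  rw [stirlingFirst, ← descPochhammer_map (Int.castRingHom ℚ) n, coeff_map]
  simp

lemma Dpoly_coeff (n : ℕ) : ∀ k : ℕ,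
    (Dpoly n).coeff k * 2^k = 2^n * (descPochhammer ℚ n).coeff k := by
  induction n with
  | zero =>
    intro k
    simp only [Dpoly, Finset.range_zero, Finset.prod_empty, descPochhammer_zero, pow_zero, one_mul]
    by_cases hk : k = 0 <;> simp [coeff_one, hk]
  | succ n ih =>
    have hD : Dpoly (n+1) = Dpoly n * (X - C (2*(n:ℚ))) := by
      rw [Dpoly, Finset.prod_range_succ, ← Dpoly]
    have hd : descPochhammer ℚ (n+1) = descPochhammer ℚ n * (X - C ((n:ℚ))) := by
      rw [descPochhammer_succ_right, C_eq_natCast]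
    intro k
    cases k with
    | zero =>
      rw [hD, hd]
      rw [coeff_zero_eq_eval_zero, coeff_zero_eq_eval_zero]
      simp only [eval_mul, eval_sub, eval_X, eval_C, zero_sub]
      have h0 := ih 0
      rw [coeff_zero_eq_eval_zero, coeff_zero_eq_eval_zero] at h0
      rw [pow_succ]
      simp only [pow_zero, mul_one] at h0 ⊢
      rw [h0]
      ring
    | succ k =>
      rw [hD, hd, coeff_mul_X_sub_C, coeff_mul_X_sub_C]
      have h1 := ih k
      have h2 := ih (k+1)
      linear_combination 2*h1 - 2*(n:ℚ)*h2

lemma Dpoly_natDegree_le (n : ℕ) : (Dpoly n).natDegree ≤ n := by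
  refine le_trans (Polynomial.natDegree_prod_le _ _) ?_
  have h : ∀ x ∈ range n, (X - C (2*(x:ℚ))).natDegree = 1 := fun x _ => natDegree_X_sub_C _
  rw [Finset.sum_congr rfl h]
  simp

lemma L_eq_sum (n : ℕ) (p : ℚ[X]) (h : p.natDegree < n) :
    L p = ∑ k ∈ range n, p.coeff k * _root_.bernoulli k := by
  rw [L, Polynomial.lsum_apply]
  rw [Polynomial.sum_over_range' p (fun j => by simp) n h]
  simp [LinearMap.toSpanSingleton_apply, smul_eq_mul]

theorem stmt1_aux (n : ℕ) :
    ∑ k ∈ Finset.range (n + 1), 2 ^ (n - k) * (stirlingFirst n k : ℚ) * _root_.bernoulli k =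
      ∑ k ∈ Finset.range (n + 1),
        besselFirst n k * ((-1) ^ k * (Nat.factorial k) / (k + 1)) := by
  have step1 : ∀ k ∈ range (n+1),
      2 ^ (n - k) * (stirlingFirst n k : ℚ) * _root_.bernoulli k
        = (Dpoly n).coeff k * _root_.bernoulli k := by
    intro k hk
    rw [Finset.mem_range] at hk
    have hkn : k ≤ n := by omega
    have hc := Dpoly_coeff n k
    have h2 : (2:ℚ)^n = 2^(n-k) * 2^k := by
      rw [← pow_add]
      congr 1
      omega
    have hne : (2:ℚ)^k ≠ 0 := by positivity
    have hcoeff : (Dpoly n).coeff k = 2^(n-k) * (descPochhammer ℚ n).coeff k := by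
      apply mul_right_cancel₀ hne
      rw [hc, h2]
      ring
    rw [stirlingFirst_cast, mul_assoc, ← mul_assoc, ← hcoeff]
  rw [Finset.sum_congr rfl step1]
  rw [← L_eq_sum (n+1) (Dpoly n) (by have := Dpoly_natDegree_le n; omega)]
  rw [Dpoly_eq, map_sum]
  refine Finset.sum_congr rfl fun k _ => ?_
  rw [← smul_eq_C_mul, map_smul, smul_eq_mul, L_descPochhammer]

end Aux

theorem stmt1 (n : ℕ) :
    ∑ k ∈ Finset.range (n + 1), 2 ^ (n - k) * (stirlingFirst n k : ℚ) * bernoulli k =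
      ∑ k ∈ Finset.range (n + 1),
        besselFirst n k * ((-1) ^ k * (Nat.factorial k) / (k + 1)) := by
  exact stmt1_aux n
end

section
/- For every natural number n, the Bernoulli number B_n satisfies B_n = ∑_{k=0}^{n} S(n,k) · (-1)^k · k! / (k+1), where S(n,k) are the Stirling numbers of the second kind. -/
/-- The Stirling numbers of the second kind `S(n,k)`, counting the partitions of an
`n`-element set into `k` nonempty blocks, defined via the standard recurrence
`S(n+1,k+1) = (k+1)·S(n,k+1) + S(n,k)` with `S(0,0) = 1`. -/
def stirlingSecond : ℕ → ℕ → ℕ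
  | 0, 0 => 1
  | 0, _ + 1 => 0
  | _ + 1, 0 => 0
  | n + 1, k + 1 => (k + 1) * stirlingSecond n (k + 1) + stirlingSecond n k

open Finset

lemma stirlingSecond_eq_zero_of_lt : ∀ {n k : ℕ}, n < k → stirlingSecond n k = 0 := by
  intro n
  induction n with
  | zero => intro k h; obtain ⟨j, rfl⟩ := Nat.exists_eq_add_of_lt h; rfl
  | succ n ih =>
    intro k h
    obtain ⟨j, rfl⟩ : ∃ j, k = j + 1 := ⟨k - 1, by omega⟩
    show (j + 1) * stirlingSecond n (j + 1) + stirlingSecond n j = 0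
    rw [ih (by omega), ih (by omega)]
    ring

lemma lemA (n : ℕ) : ∀ k : ℕ,
    ∑ i ∈ range (n + 1), n.choose i * stirlingSecond i k = stirlingSecond (n + 1) (k + 1) := by
  induction n with
  | zero =>
    intro k
    cases k <;> simp [stirlingSecond]
  | succ n ih =>
    intro k
    have peel : ∑ i ∈ range (n + 2), (n + 1).choose i * stirlingSecond i k
        = (∑ j ∈ range (n + 1), (n.choose j + n.choose (j + 1)) * stirlingSecond (j + 1) k)
          + n.choose 0 * stirlingSecond 0 k := by
      rw [Finset.sum_range_succ']
      simp [Nat.choose_succ_succ]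
    have split : ∑ i ∈ range (n + 2), (n + 1).choose i * stirlingSecond i k
        = (∑ j ∈ range (n + 1), n.choose j * stirlingSecond (j + 1) k)
          + ∑ i ∈ range (n + 1), n.choose i * stirlingSecond i k := by
      rw [peel]
      have : ∑ i ∈ range (n + 1), n.choose i * stirlingSecond i k
          = (∑ j ∈ range (n + 1), n.choose (j + 1) * stirlingSecond (j + 1) k)
            + n.choose 0 * stirlingSecond 0 k := by
        have h2 : ∑ i ∈ range (n + 1), n.choose i * stirlingSecond i k
            = ∑ i ∈ range (n + 2), n.choose i * stirlingSecond i k := by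
          rw [Finset.sum_range_succ (n := n + 1)]
          simp [Nat.choose_succ_self]
        rw [h2, Finset.sum_range_succ']
      rw [this]
      simp [add_mul, Finset.sum_add_distrib]
      ring
    rw [split, ih k]
    cases k with
    | zero =>
      have hz : ∀ j ∈ range (n + 1), n.choose j * stirlingSecond (j + 1) 0 = 0 := by
        intro j _; rfl
      rw [Finset.sum_congr rfl hz]
      simp
      show stirlingSecond (n + 1) 1 = 1 * stirlingSecond (n + 1) 1 + stirlingSecond (n + 1) 0
      cases n <;> simp [stirlingSecond]
    | succ k' =>
      have hstep : ∀ j ∈ range (n + 1), n.choose j * stirlingSecond (j + 1) (k' + 1)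
          = (k' + 1) * (n.choose j * stirlingSecond j (k' + 1)) + n.choose j * stirlingSecond j k' := by
        intro j _
        show n.choose j * ((k' + 1) * stirlingSecond j (k' + 1) + stirlingSecond j k') = _
        ring
      rw [Finset.sum_congr rfl hstep, Finset.sum_add_distrib, ← Finset.mul_sum, ih (k' + 1), ih k']
      show (k' + 1) * stirlingSecond (n + 1) (k' + 2) + stirlingSecond (n + 1) (k' + 1)
          + stirlingSecond (n + 1) (k' + 1 + 1)
        = (k' + 1 + 1) * stirlingSecond (n + 1) (k' + 1 + 1) + stirlingSecond (n + 1) (k' + 1)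
      ring

lemma lemB (n : ℕ) :
    ∑ k ∈ range (n + 1), (-1 : ℚ) ^ k * (Nat.factorial k) * stirlingSecond n (k + 1)
      = if n = 1 then 1 else 0 := by
  cases n with
  | zero => simp [stirlingSecond]
  | succ n =>
    have hrec : ∀ k ∈ range (n + 2),
        (-1 : ℚ) ^ k * (Nat.factorial k) * stirlingSecond (n + 1) (k + 1)
        = (-1 : ℚ) ^ k * (Nat.factorial (k + 1)) * stirlingSecond n (k + 1)
          + (-1 : ℚ) ^ k * (Nat.factorial k) * stirlingSecond n k := by
      intro k _
      show (-1 : ℚ) ^ k * (Nat.factorial k)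
            * (((k + 1) * stirlingSecond n (k + 1) + stirlingSecond n k : ℕ) : ℚ) = _
      push_cast [Nat.factorial_succ]
      ring
    rw [Finset.sum_congr rfl hrec, Finset.sum_add_distrib]
    have h1 : ∑ k ∈ range (n + 2), (-1 : ℚ) ^ k * (Nat.factorial (k + 1)) * stirlingSecond n (k + 1)
        = ∑ k ∈ range (n + 1), (-1 : ℚ) ^ k * (Nat.factorial (k + 1)) * stirlingSecond n (k + 1) := by
      rw [Finset.sum_range_succ, stirlingSecond_eq_zero_of_lt (by omega)]
      simp
    have h2 : ∑ k ∈ range (n + 2), (-1 : ℚ) ^ k * (Nat.factorial k) * stirlingSecond n k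
        = (∑ k ∈ range (n + 1), (-1 : ℚ) ^ (k + 1) * (Nat.factorial (k + 1)) * stirlingSecond n (k + 1))
          + stirlingSecond n 0 := by
      rw [Finset.sum_range_succ' (fun k => (-1 : ℚ) ^ k * (Nat.factorial k) * stirlingSecond n k)]
      simp
    rw [h1, h2]
    have h3 : ∑ k ∈ range (n + 1), (-1 : ℚ) ^ (k + 1) * (Nat.factorial (k + 1)) * stirlingSecond n (k + 1)
        = -∑ k ∈ range (n + 1), (-1 : ℚ) ^ k * (Nat.factorial (k + 1)) * stirlingSecond n (k + 1) := by
      rw [← Finset.sum_neg_distrib]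
      refine Finset.sum_congr rfl fun k _ => ?_
      ring
    rw [h3]
    cases n <;> simp [stirlingSecond]

/-- The right-hand side sum. -/
noncomputable def Tb (n : ℕ) : ℚ :=
  ∑ k ∈ Finset.range (n + 1), (stirlingSecond n k : ℚ) * (-1) ^ k * (Nat.factorial k) / (k + 1)

lemma lemC (n : ℕ) :
    ∑ i ∈ range n, (n.choose i : ℚ) * Tb i = if n = 1 then 1 else 0 := by
  cases n with
  | zero => simp
  | succ m =>
    have key : ∑ i ∈ range (m + 2), ((m + 1).choose i : ℚ) * Tb i
        = (if m + 1 = 1 then 1 else 0) + Tb (m + 1) := by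
      have hext : ∀ i ∈ range (m + 2), ((m + 1).choose i : ℚ) * Tb i
          = ∑ k ∈ range (m + 2),
              ((m + 1).choose i : ℚ) * ((stirlingSecond i k : ℚ) * (-1) ^ k * (Nat.factorial k) / (k + 1)) := by
        intro i hi
        rw [Tb, Finset.mul_sum]
        refine Finset.sum_subset ?_ ?_
        · intro x hx
          simp only [Finset.mem_range] at *
          omega
        · intro x _ hx
          simp only [Finset.mem_range, not_lt] at hx
          rw [stirlingSecond_eq_zero_of_lt (by omega)]
          simp
      rw [Finset.sum_congr rfl hext, Finset.sum_comm]
      have hinner : ∀ k ∈ range (m + 2),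
          (∑ i ∈ range (m + 2),
              ((m + 1).choose i : ℚ) * ((stirlingSecond i k : ℚ) * (-1) ^ k * (Nat.factorial k) / (k + 1)))
          = (stirlingSecond (m + 2) (k + 1) : ℚ) * (-1) ^ k * (Nat.factorial k) / (k + 1) := by
        intro k _
        have := lemA (m + 1) k
        have hcast : ((∑ i ∈ range (m + 2), (m + 1).choose i * stirlingSecond i k : ℕ) : ℚ)
            = (stirlingSecond (m + 2) (k + 1) : ℚ) := by rw [this]
        push_cast at hcast
        calc ∑ i ∈ range (m + 2),
              ((m + 1).choose i : ℚ) * ((stirlingSecond i k : ℚ) * (-1) ^ k * (Nat.factorial k) / (k + 1))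
            = (∑ i ∈ range (m + 2), ((m + 1).choose i : ℚ) * (stirlingSecond i k : ℚ))
                * ((-1) ^ k * (Nat.factorial k) / (k + 1)) := by
              rw [Finset.sum_mul]
              refine Finset.sum_congr rfl fun i _ => ?_
              ring
          _ = (stirlingSecond (m + 2) (k + 1) : ℚ) * (-1) ^ k * (Nat.factorial k) / (k + 1) := by
              rw [hcast]; ring
      rw [Finset.sum_congr rfl hinner]
      have hterm : ∀ k ∈ range (m + 2),
          (stirlingSecond (m + 2) (k + 1) : ℚ) * (-1) ^ k * (Nat.factorial k) / (k + 1)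
          = (-1 : ℚ) ^ k * (Nat.factorial k) * stirlingSecond (m + 1) (k + 1)
            + (stirlingSecond (m + 1) k : ℚ) * (-1) ^ k * (Nat.factorial k) / (k + 1) := by
        intro k _
        have hk : ((k : ℚ) + 1) ≠ 0 := by positivity
        show (((k + 1) * stirlingSecond (m + 1) (k + 1) + stirlingSecond (m + 1) k : ℕ) : ℚ)
            * (-1) ^ k * (Nat.factorial k) / (k + 1) = _
        push_cast
        field_simp
      rw [Finset.sum_congr rfl hterm, Finset.sum_add_distrib, lemB (m + 1)]
      rfl
    have := key
    rw [Finset.sum_range_succ] at this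
    simp only [Nat.choose_self, Nat.cast_one, one_mul] at this
    have : ∑ i ∈ range (m + 1), ((m + 1).choose i : ℚ) * Tb i = (if m + 1 = 1 then 1 else 0) := by
      linarith [this]
    exact this

theorem stmt5 (n : ℕ) :
    bernoulli n =
      ∑ k ∈ Finset.range (n + 1),
        (stirlingSecond n k : ℚ) * (-1) ^ k * (Nat.factorial k) / (k + 1) := by
  show bernoulli n = Tb n
  induction n using Nat.strong_induction_on with
  | _ n ih =>
    have h1 := sum_bernoulli (n + 1)
    have h2 := lemC (n + 1)
    rw [Finset.sum_range_succ] at h1 h2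
    have heq : ∑ k ∈ range n, ((n + 1).choose k : ℚ) * bernoulli k
        = ∑ k ∈ range n, ((n + 1).choose k : ℚ) * Tb k := by
      refine Finset.sum_congr rfl fun k hk => ?_
      rw [ih k (Finset.mem_range.mp hk)]
    rw [heq] at h1
    have h3 : (((n + 1).choose n : ℕ) : ℚ) * bernoulli n = (((n + 1).choose n : ℕ) : ℚ) * Tb n := by
      have := h1.trans h2.symm
      linarith [this]
    have hch : (((n + 1).choose n : ℕ) : ℚ) = (n : ℚ) + 1 := by
      rw [Nat.choose_succ_self_right]
      push_cast
      ring
    rw [hch] at h3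
    have hne : ((n : ℚ) + 1) ≠ 0 := by positivity
    exact mul_left_cancel₀ hne h3
end
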